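/- arXiv:1704.02891 — 2 statements merged into one kernel-verified Lean document; each statement's English description precedes it below -/
import Mathlib

section
/- Let H be a real Hilbert space, V ⊆ H a subspace with its own inner product, A : V → V' the duality map, and suppose A has an orthonormal basis of eigenvectors (w_j) in H with eigenvalues λ_j ≥ c j^α for constants c, α > 0. Then the Kolmogorov ε-entropy of the unit ball B_V(0,1) in H satisfies H_ε(B_V(0,1), H) < ((log 3 + α)/log 2) · (2/(c ε²))^{1/α} for all ε > 0. -/
open scoped InnerProductSpace
open MeasureTheory Metric Finset



section LogFactorial

lemma aux_log_factorial (N : ℕ) :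
    (N : ℝ) * Real.log N - N ≤ ∑ k ∈ Finset.range N, Real.log (k+1) := by
  induction N with
  | zero => simp
  | succ N ih =>
    rw [Finset.sum_range_succ]
    have key : (N:ℝ) * Real.log (N+1) ≤ (N:ℝ) * Real.log N + 1 := by
      rcases Nat.eq_zero_or_pos N with h | h
      · simp [h]
      · have hN : (0:ℝ) < N := by exact_mod_cast h
        have h1 : Real.log ((N+1)/N) ≤ (N+1)/N - 1 :=
          Real.log_le_sub_one_of_pos (by positivity)
        rw [Real.log_div (by positivity) (by positivity)] at h1
        have h2 : ((N:ℝ)+1)/N - 1 = 1/N := by field_simp; ring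
        rw [h2] at h1
        have := mul_le_mul_of_nonneg_left h1 hN.le
        have h3 : (N:ℝ) * (1/N) = 1 := by field_simp
        nlinarith
    push_cast
    nlinarith

end LogFactorial

lemma aux_norm_le {n : ℕ} (v : EuclideanSpace ℝ (Fin n)) {r : ℝ} (hr : 0 ≤ r)
    (h : ∑ j, (v j)^2 ≤ r^2) : ‖v‖ ≤ r := by
  rw [EuclideanSpace.norm_eq]
  have : ∑ j, ‖v j‖^2 ≤ r^2 := by simpa [Real.norm_eq_abs, sq_abs] using h
  calc Real.sqrt (∑ j, ‖v j‖^2) ≤ Real.sqrt (r^2) := Real.sqrt_le_sqrt this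
    _ = r := Real.sqrt_sq hr

lemma aux_sq_norm {n : ℕ} (v : EuclideanSpace ℝ (Fin n)) : ‖v‖^2 = ∑ j, (v j)^2 := by
  rw [EuclideanSpace.norm_eq, Real.sq_sqrt (by positivity)]
  simp [Real.norm_eq_abs, sq_abs]

lemma ellipsoid_sep_card {n : ℕ} (b : Fin n → ℝ) (ρ : ℝ) (hρ : 0 < ρ) (hb : ∀ j, ρ ≤ b j)
    (S : Finset (EuclideanSpace ℝ (Fin n)))
    (hSK : ∀ x ∈ S, (∑ j, (x j)^2 / (b j)^2) ≤ 1)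
    (hsep : ((S : Set (EuclideanSpace ℝ (Fin n))).Pairwise fun a a' => ρ < dist a a')) :
    (S.card : ℝ) ≤ ∏ j, (3 * b j / ρ) := by
  classical
  have hbpos : ∀ j, 0 < b j := fun j => lt_of_lt_of_le hρ (hb j)
  let D : EuclideanSpace ℝ (Fin n) →ₗ[ℝ] EuclideanSpace ℝ (Fin n) :=
    { toFun := fun x => WithLp.toLp 2 (fun j => b j * x j)
      map_add' := by intro x y; ext j; show b j * (x j + y j) = b j * x j + b j * y j; ring
      map_smul' := by intro c x; ext j; show b j * (c * x j) = c * (b j * x j); ring }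
  have hdet : LinearMap.det D = ∏ j, b j := by
    have h : LinearMap.toMatrix (EuclideanSpace.basisFun (Fin n) ℝ).toBasis
        (EuclideanSpace.basisFun (Fin n) ℝ).toBasis D = Matrix.diagonal b := by
      ext i j
      simp only [LinearMap.toMatrix_apply, OrthonormalBasis.coe_toBasis,
        OrthonormalBasis.coe_toBasis_repr_apply, EuclideanSpace.basisFun_repr,
        EuclideanSpace.basisFun_apply]
      show b i * (EuclideanSpace.single j (1:ℝ)) i = _
      rw [EuclideanSpace.single_apply]
      by_cases hij : i = j <;> simp [Matrix.diagonal, hij]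
    rw [← LinearMap.det_toMatrix (EuclideanSpace.basisFun (Fin n) ℝ).toBasis, h,
      Matrix.det_diagonal]
  -- each small ball is inside the dilated ellipsoid
  have hsub : ∀ x ∈ S, closedBall x (ρ/2) ⊆ D '' closedBall 0 (3/2) := by
    intro x hx z hz
    let y1 : EuclideanSpace ℝ (Fin n) := WithLp.toLp 2 (fun j => x j / b j)
    let y2 : EuclideanSpace ℝ (Fin n) := WithLp.toLp 2 (fun j => (z j - x j) / b j)
    refine ⟨y1 + y2, ?_, ?_⟩
    · rw [mem_closedBall, dist_zero_right]
      have h1 : ‖y1‖ ≤ 1 := by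
        refine aux_norm_le _ zero_le_one ?_
        rw [one_pow]
        refine le_trans (le_of_eq ?_) (hSK x hx)
        exact Finset.sum_congr rfl fun j _ => by rw [div_pow]
      have h2 : ‖y2‖ ≤ 1/2 := by
        refine aux_norm_le _ (by norm_num) ?_
        have hzx : ∑ j, (z j - x j)^2 ≤ (ρ/2)^2 := by
          have hd := mem_closedBall.1 hz
          rw [dist_eq_norm] at hd
          have h := aux_sq_norm (z - x)
          have heq : ∑ j, (z j - x j)^2 = ‖z - x‖^2 := by
            rw [h]; exact Finset.sum_congr rfl fun j _ => rfl
          rw [heq]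
          nlinarith [norm_nonneg (z - x)]
        calc ∑ j, ((z j - x j)/ b j)^2 ≤ ∑ j, ((z j - x j)/ρ)^2 := by
              refine Finset.sum_le_sum fun j _ => ?_
              rw [div_pow, div_pow]
              exact div_le_div_of_nonneg_left (by positivity) (by positivity) (by nlinarith [hb j])
          _ = (∑ j, (z j - x j)^2) / ρ^2 := by
              rw [Finset.sum_div]
              exact Finset.sum_congr rfl fun j _ => by rw [div_pow]
          _ ≤ (ρ/2)^2/ρ^2 := div_le_div_of_nonneg_right hzx (by positivity)
          _ = (1/2)^2 := by field_simp
      calc ‖y1 + y2‖ ≤ ‖y1‖ + ‖y2‖ := norm_add_le _ _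
        _ ≤ 1 + 1/2 := add_le_add h1 h2
        _ = 3/2 := by norm_num
    · ext j
      show b j * ((x j / b j) + (z j - x j) / b j) = z j
      have hbne := (hbpos j).ne'
      field_simp
      ring
  -- disjointness of the small balls
  have hdisj : (S : Set (EuclideanSpace ℝ (Fin n))).PairwiseDisjoint
      (fun x => closedBall x (ρ/2)) := by
    intro x hx y hy hxy
    apply closedBall_disjoint_closedBall
    have := hsep hx hy hxy
    linarith
  -- measure computation
  have hμ : (S.card : ENNReal) * (ENNReal.ofReal ((ρ/2)^n) * volume (ball (0 : EuclideanSpace ℝ (Fin n)) 1))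
      ≤ ENNReal.ofReal ((∏ j, b j) * (3/2)^n) * volume (ball (0 : EuclideanSpace ℝ (Fin n)) 1) := by
    have hrank : Module.finrank ℝ (EuclideanSpace ℝ (Fin n)) = n := by
      simp [finrank_euclideanSpace_fin]
    have hball : ∀ x : EuclideanSpace ℝ (Fin n), volume (closedBall x (ρ/2)) =
        ENNReal.ofReal ((ρ/2)^n) * volume (ball (0 : EuclideanSpace ℝ (Fin n)) 1) := by
      intro x
      rw [Measure.addHaar_closedBall volume x (by positivity), hrank]
    calc (S.card : ENNReal) * (ENNReal.ofReal ((ρ/2)^n) * volume (ball (0 : EuclideanSpace ℝ (Fin n)) 1))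
        = ∑ x ∈ S, volume (closedBall x (ρ/2)) := by
          rw [Finset.sum_congr rfl fun x _ => hball x, Finset.sum_const, nsmul_eq_mul]
      _ = volume (⋃ x ∈ S, closedBall x (ρ/2)) := by
          rw [measure_biUnion_finset hdisj fun x _ => measurableSet_closedBall]
      _ ≤ volume (D '' closedBall 0 (3/2)) := by
          apply measure_mono
          exact Set.iUnion₂_subset hsub
      _ = ENNReal.ofReal ((∏ j, b j) * (3/2)^n) * volume (ball (0 : EuclideanSpace ℝ (Fin n)) 1) := by
          rw [Measure.addHaar_image_linearMap, hdet,
            Measure.addHaar_closedBall volume _ (by norm_num : (0:ℝ) ≤ 3/2), hrank]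
          rw [abs_of_pos (Finset.prod_pos fun j _ => hbpos j)]
          rw [← mul_assoc, ← ENNReal.ofReal_mul (le_of_lt (Finset.prod_pos fun j _ => hbpos j))]
  -- extract the real inequality
  have hvpos : volume (ball (0 : EuclideanSpace ℝ (Fin n)) 1) ≠ 0 :=
    (measure_ball_pos _ _ one_pos).ne'
  have hvlt : volume (ball (0 : EuclideanSpace ℝ (Fin n)) 1) ≠ ⊤ := measure_ball_lt_top.ne
  rw [← mul_assoc] at hμ
  have hμ2 : (S.card : ENNReal) * ENNReal.ofReal ((ρ/2)^n) ≤
      ENNReal.ofReal ((∏ j, b j) * (3/2)^n) :=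
    (ENNReal.mul_le_mul_iff_left hvpos hvlt).mp hμ
  have hμ3 : (S.card : ℝ) * (ρ/2)^n ≤ (∏ j, b j) * (3/2)^n := by
    have hiff : ENNReal.ofReal ((S.card : ℝ) * (ρ/2)^n) ≤ ENNReal.ofReal ((∏ j, b j) * (3/2)^n) ↔
        (S.card : ℝ) * (ρ/2)^n ≤ (∏ j, b j) * (3/2)^n :=
      ENNReal.ofReal_le_ofReal_iff (mul_nonneg (Finset.prod_nonneg fun j _ => (hbpos j).le) (by positivity))
    rw [← hiff]
    rw [ENNReal.ofReal_mul (Nat.cast_nonneg _)]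
    simpa [ENNReal.ofReal_natCast] using hμ2
  have hprod : ∏ j, (3 * b j / ρ) = ((∏ j, b j) * (3/2)^n) / ((ρ/2)^n) := by
    rw [Finset.prod_div_distrib, Finset.prod_mul_distrib, Finset.prod_const, Finset.prod_const]
    simp only [Finset.card_univ, Fintype.card_fin]
    field_simp
    rw [div_pow, div_pow]; ring
  rw [hprod, le_div_iff₀ (by positivity)]
  exact hμ3

lemma ellipsoid_cover {n : ℕ} (b : Fin n → ℝ) (ρ : ℝ) (hρ : 0 < ρ) (hb : ∀ j, ρ ≤ b j) :
    ∃ S : Finset (EuclideanSpace ℝ (Fin n)),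
      ((S.card : ℝ) ≤ ∏ j, (3 * b j / ρ)) ∧
      ∀ x : EuclideanSpace ℝ (Fin n), (∑ j, (x j)^2 / (b j)^2) ≤ 1 →
        ∃ y ∈ S, dist x y ≤ ρ := by
  classical
  set Q : ℕ → Prop := fun k => ∃ S : Finset (EuclideanSpace ℝ (Fin n)),
    (∀ x ∈ S, (∑ j, (x j)^2 / (b j)^2) ≤ 1) ∧
    ((S : Set (EuclideanSpace ℝ (Fin n))).Pairwise fun a a' => ρ < dist a a') ∧ S.card = k
    with hQdef
  have hQ0 : Q 0 := ⟨∅, by simp, by simp, rfl⟩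
  have hbound : ∀ k, Q k → k ≤ Nat.floor (∏ j, (3 * b j / ρ)) := by
    rintro k ⟨S, h1, h2, h3⟩
    have h := ellipsoid_sep_card b ρ hρ hb S h1 h2
    rw [h3] at h
    exact Nat.le_floor h
  set M := Nat.floor (∏ j, (3 * b j / ρ)) with hM
  have hQmax : Q (Nat.findGreatest Q M) := Nat.findGreatest_spec (Nat.zero_le M) hQ0
  obtain ⟨S, hS1, hS2, hS3⟩ := hQmax
  refine ⟨S, ellipsoid_sep_card b ρ hρ hb S hS1 hS2, ?_⟩
  intro x hx
  by_contra hcon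
  push_neg at hcon
  have hcon' : ∀ y ∈ S, ρ < dist x y := hcon
  have hxS : x ∉ S := by
    intro h
    have := hcon' x h
    simp at this
    linarith
  have hQk : Q (S.card + 1) := by
    refine ⟨insert x S, ?_, ?_, ?_⟩
    · intro y hy
      rcases Finset.mem_insert.1 hy with h | h
      · exact h ▸ hx
      · exact hS1 y h
    · rw [Finset.coe_insert]
      haveI : Std.Symm (fun a a' : EuclideanSpace ℝ (Fin n) => ρ < dist a a') := ⟨by
        intro a a' h
        rw [dist_comm]; exact h⟩
      refine (Set.pairwise_insert_of_symmetric (r := fun a a' : EuclideanSpace ℝ (Fin n) => ρ < dist a a')).2 ⟨hS2, fun y hy _ => hcon' y hy⟩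
    · rw [Finset.card_insert_of_notMem hxS]
  have hle : S.card + 1 ≤ M := hbound _ hQk
  have := Nat.le_findGreatest hle hQk
  omega

set_option maxHeartbeats 2000000 in
/-- Kolmogorov ε-entropy upper bound: if `H` is a real Hilbert space with an orthonormal
basis `(w_j)` of eigenvectors of the duality map with eigenvalues `λ_j ≥ c j^α`
(0-indexed: `λ_j ≥ c (j+1)^α`), then the unit ball of `V`, described as
`B = {u : Σ_j λ_j ⟪u,w_j⟫² ≤ 1}`, admits for every `ε > 0` a finite `ε`-cover in `H`
whose binary logarithm of cardinality is `< ((log 3 + α)/log 2)·(2/(c ε²))^{1/α}`. -/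
theorem stmt7 {H : Type*} [NormedAddCommGroup H] [InnerProductSpace ℝ H]
    [CompleteSpace H]
    (w : ℕ → H) (hw : Orthonormal ℝ w)
    (hw_total : ⊤ ≤ (Submodule.span ℝ (Set.range w)).topologicalClosure)
    (lam : ℕ → ℝ) (c α : ℝ) (hc : 0 < c) (hα : 0 < α)
    (hlam : ∀ j : ℕ, c * ((j : ℝ) + 1) ^ α ≤ lam j)
    (B : Set H)
    (hB : B = {u : H | Summable (fun j => lam j * ⟪u, w j⟫_ℝ ^ 2) ∧
      ∑' j : ℕ, lam j * ⟪u, w j⟫_ℝ ^ 2 ≤ 1})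
    (ε : ℝ) (hε : 0 < ε) :
    ∃ s : Finset H, (B ⊆ ⋃ x ∈ s, Metric.closedBall x ε) ∧
      Real.logb 2 s.card <
        ((Real.log 3 + α) / Real.log 2) * (2 / (c * ε ^ 2)) ^ (1 / α) := by
  classical
  subst hB
  have hlog2 : (0:ℝ) < Real.log 2 := Real.log_pos one_lt_two
  have hlog3 : (0:ℝ) < Real.log 3 := Real.log_pos (by norm_num)
  set T : ℝ := (2 / (c * ε ^ 2)) ^ (1 / α) with hTdef
  have hTpos : 0 < T := Real.rpow_pos_of_pos (by positivity) _
  have hTα : T ^ α = 2 / (c * ε ^ 2) := by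
    rw [hTdef, ← Real.rpow_mul (by positivity), one_div, inv_mul_cancel₀ hα.ne',
      Real.rpow_one]
  have hlampos : ∀ j : ℕ, 0 < lam j := fun j =>
    lt_of_lt_of_le (by positivity) (hlam j)
  -- eigenvalues beyond T are large
  have hlam_big : ∀ i : ℕ, T ≤ (i:ℝ) + 1 → 2 / ε^2 ≤ lam i := by
    intro i hi
    have h1 : T ^ α ≤ ((i:ℝ)+1) ^ α := Real.rpow_le_rpow hTpos.le hi hα.le
    have h2 : c * T ^ α ≤ c * ((i:ℝ)+1)^α := by
      exact mul_le_mul_of_nonneg_left h1 hc.le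
    rw [hTα] at h2
    have h3 : c * (2 / (c * ε^2)) = 2/ε^2 := by field_simp
    rw [h3] at h2
    exact h2.trans (hlam i)
  set N : ℕ := Nat.floor T with hNdef
  have hNT : (N : ℝ) ≤ T := Nat.floor_le hTpos.le
  have hTN : T < (N : ℝ) + 1 := Nat.lt_floor_add_one T
  -- the Hilbert basis and Parseval
  set bb : HilbertBasis ℕ ℝ H := HilbertBasis.mk hw hw_total with hbbdef
  have hPar : ∀ u : H, HasSum (fun i => ⟪u, w i⟫_ℝ ^ 2) (‖u‖^2) := by
    intro u
    have h := bb.hasSum_inner_mul_inner u u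
    rw [hbbdef, HilbertBasis.coe_mk hw hw_total] at h
    have heq : (fun i => ⟪u, w i⟫_ℝ * ⟪w i, u⟫_ℝ) = fun i => ⟪u, w i⟫_ℝ ^ 2 := by
      funext i
      rw [real_inner_comm (w i) u, sq]
    rw [heq] at h
    rwa [real_inner_self_eq_norm_sq] at h
  -- the ellipsoid axes
  set ρ : ℝ := Real.sqrt (ε^2/2) with hρdef
  have hρpos : 0 < ρ := Real.sqrt_pos.2 (by positivity)
  have hρsq : ρ^2 = ε^2/2 := Real.sq_sqrt (by positivity)
  set ba : Fin N → ℝ := fun j => Real.sqrt (ε^2/2 * (T/((j:ℕ)+1))^α) with hbadef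
  have hfrac : ∀ j : Fin N, 1 ≤ T/(((j:ℕ):ℝ)+1) := by
    intro j
    rw [le_div_iff₀ (by positivity)]
    have : ((j:ℕ):ℝ) + 1 ≤ N := by
      have := j.2
      exact_mod_cast Nat.succ_le_of_lt this
    linarith [hNT]
  have hfracpos : ∀ j : Fin N, (0:ℝ) < T/(((j:ℕ):ℝ)+1) := fun j => by positivity
  have hba : ∀ j, ρ ≤ ba j := by
    intro j
    apply Real.sqrt_le_sqrt
    have h1 : (1:ℝ) ≤ (T/(((j:ℕ):ℝ)+1))^α := by
      calc (1:ℝ) = 1 ^ α := (Real.one_rpow α).symm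
        _ ≤ (T/(((j:ℕ):ℝ)+1))^α := Real.rpow_le_rpow zero_le_one (hfrac j) hα.le
    nlinarith [hε, sq_nonneg ε]
  have hba_sq : ∀ j : Fin N, (ba j)^2 = 1/(c * (((j:ℕ):ℝ)+1)^α) := by
    intro j
    rw [hbadef]
    have h0 : (0:ℝ) ≤ ε^2/2 * (T/(((j:ℕ):ℝ)+1))^α := by positivity
    rw [Real.sq_sqrt h0, Real.div_rpow hTpos.le (by positivity), hTα]
    have hne1 : (((j:ℕ):ℝ)+1)^α ≠ 0 := by positivity
    field_simp
  -- the finite-dimensional cover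
  obtain ⟨Sfin, hScard, hScover⟩ := ellipsoid_cover ba ρ hρpos hba
  set Φ : EuclideanSpace ℝ (Fin N) → H := fun y => ∑ j : Fin N, y j • w j with hΦdef
  refine ⟨Sfin.image Φ, ?_, ?_⟩
  · -- covering property
    intro u hu
    obtain ⟨husum, hule⟩ := hu
    set x : ℕ → ℝ := fun j => ⟪u, w j⟫_ℝ with hxdef
    have hxsum : Summable (fun i => x i ^ 2) := (hPar u).summable
    have hterm_nonneg : ∀ i, 0 ≤ lam i * x i ^ 2 := fun i =>
      mul_nonneg (hlampos i).le (sq_nonneg _)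
    set xv : EuclideanSpace ℝ (Fin N) := WithLp.toLp 2 (fun j => x j) with hxvdef
    -- xv is in the ellipsoid
    have hmem : ∑ j, (xv j)^2 / (ba j)^2 ≤ 1 := by
      have h1 : ∀ j : Fin N, (xv j)^2/(ba j)^2 ≤ lam ((j:ℕ)) * x ((j:ℕ)) ^2 := by
        intro j
        have hxvj : xv j = x ((j:ℕ)) := rfl
        rw [hba_sq j, div_div_eq_mul_div, div_one, hxvj]
        have h2 := hlam (j:ℕ)
        have hx2 : (0:ℝ) ≤ x ((j:ℕ))^2 := sq_nonneg _
        push_cast at h2 ⊢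
        nlinarith
      calc ∑ j, (xv j)^2/(ba j)^2 ≤ ∑ j : Fin N, lam ((j:ℕ)) * x ((j:ℕ))^2 :=
            Finset.sum_le_sum fun j _ => h1 j
        _ = ∑ j ∈ Finset.range N, lam j * x j ^2 :=
            Fin.sum_univ_eq_sum_range (fun j => lam j * x j ^2) N
        _ ≤ ∑' j, lam j * x j ^2 :=
            Summable.sum_le_tsum _ (fun i _ => hterm_nonneg i) husum
        _ ≤ 1 := hule
    obtain ⟨y, hyS, hydist⟩ := hScover xv hmem
    -- the orthonormal finite family
    have hwN : Orthonormal ℝ (fun j : Fin N => w (j:ℕ)) :=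
      hw.comp (fun j : Fin N => (j:ℕ)) Fin.val_injective
    -- inner products with the basis vectors
    have hinner : ∀ (z : EuclideanSpace ℝ (Fin N)) (j : Fin N),
        ⟪Φ z, w (j:ℕ)⟫_ℝ = z j := by
      intro z j
      rw [real_inner_comm]
      exact hwN.inner_right_fintype z j
    have hinner_u : ∀ z : EuclideanSpace ℝ (Fin N),
        ⟪u, Φ z⟫_ℝ = ∑ j : Fin N, z j * x ((j:ℕ)) := by
      intro z
      rw [hΦdef]
      rw [inner_sum]
      exact Finset.sum_congr rfl fun j _ => by
        rw [real_inner_smul_right]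
    -- Parseval for the finite part
    have hnormΦ : ∀ z : EuclideanSpace ℝ (Fin N), ‖Φ z‖^2 = ∑ j : Fin N, (z j)^2 := by
      intro z
      rw [← real_inner_self_eq_norm_sq]
      nth_rewrite 2 [hΦdef]
      rw [inner_sum]
      refine Finset.sum_congr rfl fun j _ => ?_
      rw [real_inner_smul_right, hinner z j, sq]
    set v : H := Φ xv with hvdef
    have hΦsub : ∀ z z' : EuclideanSpace ℝ (Fin N), Φ z - Φ z' = Φ (z - z') := by
      intro z z'
      rw [hΦdef]
      simp only [← Finset.sum_sub_distrib, ← sub_smul]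
      rfl
    -- orthogonality
    have horth : ⟪u - v, v - Φ y⟫_ℝ = 0 := by
      rw [hvdef, hΦsub xv y]
      simp only [hΦdef]
      rw [inner_sum]
      refine Finset.sum_eq_zero fun j _ => ?_
      rw [real_inner_smul_right, inner_sub_left]
      have h1 : ⟪(∑ k : Fin N, xv k • w (k:ℕ)), w (j:ℕ)⟫_ℝ = xv j := hinner xv j
      have h2 : ⟪u, w (j:ℕ)⟫_ℝ = xv j := rfl
      rw [h1, h2, sub_self, mul_zero]
    -- tail bound
    have htail : ‖u - v‖^2 ≤ ε^2/2 := by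
      have hexp : ‖u - v‖^2 = ‖u‖^2 - ∑ j ∈ Finset.range N, x j ^2 := by
        rw [hvdef, norm_sub_sq_real, hinner_u xv, hnormΦ xv]
        have hxx : ∑ j : Fin N, xv j * x ((j:ℕ)) = ∑ j : Fin N, (xv j)^2 :=
          Finset.sum_congr rfl fun j _ => by rw [sq]
        have h2 : ∑ j : Fin N, (xv j)^2 = ∑ j ∈ Finset.range N, x j ^2 :=
          Fin.sum_univ_eq_sum_range (fun j => x j ^2) N
        linarith [hxx, h2]
      have hsplit : ∑ j ∈ Finset.range N, x j ^2
          + ∑' (i : {i // i ∉ Finset.range N}), x (i:ℕ) ^2 = ∑' i, x i ^2 :=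
        Summable.sum_add_tsum_subtype_compl hxsum (Finset.range N)
      have htsum : ∑' i, x i ^2 = ‖u‖^2 := (hPar u).tsum_eq
      have htail_le : ∑' (i : {i // i ∉ Finset.range N}), x (i:ℕ) ^2 ≤ ε^2/2 := by
        have hterm : ∀ i : {i // i ∉ Finset.range N},
            x (i:ℕ) ^2 ≤ ε^2/2 * (lam (i:ℕ) * x (i:ℕ)^2) := by
          rintro ⟨i, hi⟩
          have hiN : N ≤ i := by simpa using hi
          have hT : T ≤ (i:ℝ) + 1 := by
            have : (N:ℝ) ≤ i := by exact_mod_cast hiN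
            linarith [hTN]
          have hl := hlam_big i hT
          have hx2 := sq_nonneg (x i)
          have h2 : 1 ≤ ε^2/2 * lam i := by
            have h5 : ε^2 * (2/ε^2) ≤ ε^2 * lam i := mul_le_mul_of_nonneg_left hl (sq_nonneg ε)
            have h6 : ε^2 * (2/ε^2) = 2 := by field_simp
            nlinarith
          calc x (i:ℕ)^2 = 1 * x i ^2 := (one_mul _).symm
            _ ≤ (ε^2/2 * lam i) * x i^2 := mul_le_mul_of_nonneg_right h2 hx2
            _ = ε^2/2 * (lam i * x i^2) := by ring
        calc ∑' (i : {i // i ∉ Finset.range N}), x (i:ℕ) ^2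
            ≤ ∑' (i : {i // i ∉ Finset.range N}), ε^2/2 * (lam (i:ℕ) * x (i:ℕ)^2) :=
              Summable.tsum_le_tsum hterm (hxsum.subtype _) (((husum.mul_left (ε^2/2))).subtype _)
          _ = ε^2/2 * ∑' (i : {i // i ∉ Finset.range N}), (lam (i:ℕ) * x (i:ℕ)^2) := by
              rw [tsum_mul_left]
          _ ≤ ε^2/2 * ∑' i, lam i * x i ^2 := by
              apply mul_le_mul_of_nonneg_left _ (by positivity)
              exact Summable.tsum_subtype_le (fun i => lam i * x i ^2) _ hterm_nonneg husum
          _ ≤ ε^2/2 * 1 := mul_le_mul_of_nonneg_left hule (by positivity)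
          _ = ε^2/2 := mul_one _
      rw [hexp, ← htsum, ← hsplit]
      linarith
    -- distance bound for the finite part
    have hfin : ‖v - Φ y‖^2 ≤ ε^2/2 := by
      rw [hvdef, hΦsub xv y, hnormΦ (xv - y)]
      have h1 : ∑ j : Fin N, ((xv - y) j)^2 = ‖xv - y‖^2 := (aux_sq_norm (xv - y)).symm
      rw [h1]
      have h2 : ‖xv - y‖ = dist xv y := (dist_eq_norm xv y).symm
      rw [h2]
      calc dist xv y ^2 ≤ ρ^2 := by
            apply sq_le_sq' _ hydist
            linarith [dist_nonneg (x := xv) (y := y), hρpos]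
        _ = ε^2/2 := hρsq
    -- combine
    have hfinal : ‖u - Φ y‖ ≤ ε := by
      have hdecomp : u - Φ y = (u - v) + (v - Φ y) := by abel
      have hsq : ‖u - Φ y‖^2 ≤ ε^2 := by
        rw [hdecomp, norm_add_sq_real, horth]
        linarith
      nlinarith [norm_nonneg (u - Φ y)]
    refine Set.mem_iUnion₂.2 ⟨Φ y, Finset.mem_image_of_mem Φ hyS, ?_⟩
    rw [Metric.mem_closedBall, dist_eq_norm]
    exact hfinal
  · -- cardinality bound
    have hRHSpos : 0 < ((Real.log 3 + α) / Real.log 2) * T := by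
      apply mul_pos (div_pos (by linarith) hlog2) hTpos
    rcases Nat.eq_zero_or_pos (Sfin.image Φ).card with h0 | hpos
    · rw [h0]
      simp only [Nat.cast_zero, Real.logb_zero]
      exact hRHSpos
    · have hcard1 : (1:ℝ) ≤ ((Sfin.image Φ).card : ℝ) := by exact_mod_cast hpos
      have hcard_le : ((Sfin.image Φ).card : ℝ) ≤ ∏ j, (3 * ba j / ρ) := by
        calc ((Sfin.image Φ).card : ℝ) ≤ (Sfin.card : ℝ) := by
              exact_mod_cast Finset.card_image_le
          _ ≤ ∏ j, (3 * ba j / ρ) := hScard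
      rcases Nat.eq_zero_or_pos N with hN0 | hN1
      · -- degenerate case: the cover has one element
        have hempty : IsEmpty (Fin N) := by rw [hN0]; exact Fin.isEmpty'
        have hprod1 : ∏ j : Fin N, (3 * ba j / ρ) = 1 := by
          rw [Finset.univ_eq_empty, Finset.prod_empty]
        rw [hprod1] at hcard_le
        have hcard_eq : (Sfin.image Φ).card = 1 :=
          le_antisymm (by exact_mod_cast hcard_le) hpos
        rw [hcard_eq]
        simpa using hRHSpos
      · -- main case
        have hNpos : (0:ℝ) < N := by exact_mod_cast hN1
        have hlogcard : Real.log ((Sfin.image Φ).card) ≤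
            Real.log (∏ j, (3 * ba j / ρ)) :=
          Real.log_le_log (by linarith) hcard_le
        have hbapos : ∀ j : Fin N, 0 < ba j := fun j => lt_of_lt_of_le hρpos (hba j)
        have hlogprod : Real.log (∏ j, (3 * ba j / ρ)) =
            ∑ j, Real.log (3 * ba j / ρ) :=
          Real.log_prod (fun j _ => by positivity)
        have hterm : ∀ j : Fin N, Real.log (3 * ba j / ρ) =
            Real.log 3 + α/2 * Real.log (T/(((j:ℕ):ℝ)+1)) := by
          intro j
          have hq : (0:ℝ) < (T/(((j:ℕ):ℝ)+1))^α := Real.rpow_pos_of_pos (hfracpos j) α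
          have hbane : ba j / ρ = Real.sqrt ((T/(((j:ℕ):ℝ)+1))^α) := by
            show Real.sqrt (ε^2/2 * (T/(((j:ℕ):ℝ)+1))^α) / ρ = _
            rw [Real.sqrt_mul (by positivity), hρdef,
              mul_div_cancel_left₀ _ (by rw [← hρdef]; exact hρpos.ne')]
          rw [mul_div_assoc, hbane,
            Real.log_mul (by norm_num) (by positivity),
            Real.log_sqrt hq.le, Real.log_rpow (hfracpos j)]
          ring
        have hsum1 : ∑ j, Real.log (3 * ba j / ρ) =
            (N:ℝ) * Real.log 3 + α/2 * ∑ j ∈ Finset.range N, Real.log (T/((j:ℝ)+1)) := by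
          rw [Finset.sum_congr rfl fun j _ => hterm j, Finset.sum_add_distrib,
            Finset.sum_const, Finset.card_univ, Fintype.card_fin, ← Finset.mul_sum,
            nsmul_eq_mul]
          congr 1
          congr 1
          exact Fin.sum_univ_eq_sum_range (fun j => Real.log (T/((j:ℝ)+1))) N
        have hsumlog : ∑ j ∈ Finset.range N, Real.log (T/((j:ℝ)+1)) ≤ T := by
          have h1 : ∑ j ∈ Finset.range N, Real.log (T/((j:ℝ)+1)) =
              (N:ℝ) * Real.log T - ∑ j ∈ Finset.range N, Real.log ((j:ℝ)+1) := by
            have hc : ∀ j ∈ Finset.range N, Real.log (T/((j:ℝ)+1)) =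
                Real.log T - Real.log ((j:ℝ)+1) := fun j _ =>
              Real.log_div hTpos.ne' (by positivity)
            rw [Finset.sum_congr rfl hc, Finset.sum_sub_distrib, Finset.sum_const,
              Finset.card_range, nsmul_eq_mul]
          rw [h1]
          have h2 := aux_log_factorial N
          have h3 : (N:ℝ) * Real.log T - (N:ℝ) * Real.log N ≤ T - N := by
            have h4 := Real.log_le_sub_one_of_pos (div_pos hTpos hNpos)
            rw [Real.log_div hTpos.ne' hNpos.ne'] at h4
            have h5 := mul_le_mul_of_nonneg_left h4 hNpos.le
            have h6 : (N:ℝ) * (T/N - 1) = T - N := by field_simp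
            nlinarith
          linarith
        have hkey : Real.log ((Sfin.image Φ).card) < (Real.log 3 + α) * T := by
          have hstep : Real.log ((Sfin.image Φ).card) ≤
              (N:ℝ) * Real.log 3 + α/2 * T := by
            rw [hlogprod, hsum1] at hlogcard
            have := mul_le_mul_of_nonneg_left hsumlog (by positivity : (0:ℝ) ≤ α/2)
            linarith
          have h7 : (N:ℝ) * Real.log 3 ≤ T * Real.log 3 :=
            mul_le_mul_of_nonneg_right hNT hlog3.le
          nlinarith
        rw [Real.logb, div_mul_eq_mul_div]
        exact div_lt_div_of_pos_right hkey hlog2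
end

section
/- Suppose W, V : [0,∞) → [0,∞) satisfy W(t) + 2∫₀ᵗ V(s) ds ≤ e^{2λt} W(0) and V'(t) ≤ (1/2)λ²(1+γ/β)² e^{2λt} W(0) for all t > 0, where λ, γ, β > 0 and V is C¹. Then for every t > 0, V(t) ≤ λ W(0) [ e^{2λt}/(2λt) + (1/4)(1+γ/β)² (2λt e^{2λt} − (e^{2λt} − 1))/(2λt) ]. -/
/-- If nonnegative `W, V` on `[0,∞)` satisfy `W(t) + 2∫₀ᵗ V ≤ e^{2λt} W(0)` and
`V'(t) ≤ (1/2)λ²(1+γ/β)² e^{2λt} W(0)` for all `t > 0` (with `V` of class `C¹`), then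
for every `t > 0`,
`V(t) ≤ λ W(0)[e^{2λt}/(2λt) + (1/4)(1+γ/β)²(2λt e^{2λt} − (e^{2λt} − 1))/(2λt)]`. -/
theorem stmt18 (W V V' : ℝ → ℝ) (lam γ β : ℝ)
    (hlam : 0 < lam) (hγ : 0 < γ) (hβ : 0 < β)
    (hpos : ∀ t : ℝ, 0 ≤ t → 0 ≤ W t ∧ 0 ≤ V t)
    (hderiv : ∀ t : ℝ, 0 ≤ t → HasDerivAt V (V' t) t)
    (hcont : ContinuousOn V' (Set.Ici (0 : ℝ)))
    (h1 : ∀ t : ℝ, 0 < t →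
      W t + 2 * ∫ s in (0 : ℝ)..t, V s ≤ Real.exp (2 * lam * t) * W 0)
    (h2 : ∀ t : ℝ, 0 < t →
      V' t ≤ (1 / 2) * lam ^ 2 * (1 + γ / β) ^ 2 * Real.exp (2 * lam * t) * W 0) :
    ∀ t : ℝ, 0 < t →
      V t ≤ lam * W 0 * (Real.exp (2 * lam * t) / (2 * lam * t) +
        (1 / 4) * (1 + γ / β) ^ 2 *
          (2 * lam * t * Real.exp (2 * lam * t) - (Real.exp (2 * lam * t) - 1)) /
            (2 * lam * t)) := by
  intro t ht
  have hW0 : 0 ≤ W 0 := (hpos 0 le_rfl).1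
  have hlamne : lam ≠ 0 := ne_of_gt hlam
  have htne : t ≠ 0 := ne_of_gt ht
  set c : ℝ := (1 + γ / β) ^ 2 with hc
  have hsub : Set.uIcc (0 : ℝ) t ⊆ Set.Ici 0 := by
    rw [Set.uIcc_of_le ht.le]; exact Set.Icc_subset_Ici_self
  have hVcont : ContinuousOn V (Set.Ici 0) := fun s hs =>
    ((hderiv s hs).continuousAt).continuousWithinAt
  have hintV : IntervalIntegrable V MeasureTheory.volume 0 t :=
    (hVcont.mono hsub).intervalIntegrable
  have hSV'cont : ContinuousOn (fun s => s * V' s) (Set.uIcc 0 t) :=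
    continuousOn_id.mul (hcont.mono hsub)
  have hintSV' : IntervalIntegrable (fun s => s * V' s) MeasureTheory.volume 0 t :=
    hSV'cont.intervalIntegrable
  -- FTC: ∫₀ᵗ (V s + s * V' s) = t * V t
  have key : (∫ s in (0:ℝ)..t, (V s + s * V' s)) = t * V t - 0 * V 0 := by
    apply intervalIntegral.integral_eq_sub_of_hasDerivAt
    · intro s hs
      have hs0 : (0:ℝ) ≤ s := hsub hs
      have := (hasDerivAt_id' s).mul (hderiv s hs0)
      exact this.congr_deriv (by ring)
    · exact ((hVcont.mono hsub).add hSV'cont).intervalIntegrable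
  have hsplit : (∫ s in (0:ℝ)..t, (V s + s * V' s)) =
      (∫ s in (0:ℝ)..t, V s) + ∫ s in (0:ℝ)..t, s * V' s :=
    intervalIntegral.integral_add hintV hintSV'
  -- bound on ∫ V
  have hIV : (∫ s in (0:ℝ)..t, V s) ≤ Real.exp (2 * lam * t) * W 0 / 2 := by
    have := h1 t ht
    have hWt := (hpos t ht.le).1
    linarith
  -- bound on ∫ s V'
  have hgcont : Continuous (fun s : ℝ => s * ((1/2) * lam^2 * c * Real.exp (2*lam*s) * W 0)) := by
    continuity
  have hintg : IntervalIntegrable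
      (fun s : ℝ => s * ((1/2) * lam^2 * c * Real.exp (2*lam*s) * W 0))
      MeasureTheory.volume 0 t := hgcont.intervalIntegrable 0 t
  have hmono : (∫ s in (0:ℝ)..t, s * V' s) ≤
      ∫ s in (0:ℝ)..t, s * ((1/2) * lam^2 * c * Real.exp (2*lam*s) * W 0) := by
    apply intervalIntegral.integral_mono_on ht.le hintSV' hintg
    intro s hs
    rcases eq_or_lt_of_le hs.1 with h | h
    · simp [← h]
    · exact mul_le_mul_of_nonneg_left (h2 s h) hs.1
  -- compute ∫ s e^{2λs}
  have hI : (∫ s in (0:ℝ)..t, s * Real.exp (2*lam*s)) =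
      (Real.exp (2*lam*t) * (2*lam*t - 1) + 1) / (4 * lam^2) := by
    have hF : ∀ s ∈ Set.uIcc (0:ℝ) t,
        HasDerivAt (fun u => Real.exp (2*lam*u) * (2*lam*u - 1) / (4*lam^2))
          (s * Real.exp (2*lam*s)) s := by
      intro s _
      have h1' : HasDerivAt (fun u : ℝ => 2*lam*u) (2*lam) s := by
        simpa using (hasDerivAt_id s).const_mul (2*lam)
      have hexp : HasDerivAt (fun u => Real.exp (2*lam*u))
          (Real.exp (2*lam*s) * (2*lam)) s := h1'.exp
      have hlin : HasDerivAt (fun u : ℝ => 2*lam*u - 1) (2*lam) s := h1'.sub_const 1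
      have := (hexp.mul hlin).div_const (4*lam^2)
      refine this.congr_deriv ?_
      rw [div_eq_iff (by positivity)]
      ring
    rw [intervalIntegral.integral_eq_sub_of_hasDerivAt hF
      ((continuous_id.mul (by continuity)).intervalIntegrable 0 t)]
    simp [Real.exp_zero]
    try field_simp
    try ring
  have hIg : (∫ s in (0:ℝ)..t, s * ((1/2) * lam^2 * c * Real.exp (2*lam*s) * W 0)) =
      (1/2) * lam^2 * c * W 0 * ((Real.exp (2*lam*t) * (2*lam*t - 1) + 1) / (4 * lam^2)) := by
    rw [← hI, ← intervalIntegral.integral_const_mul]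
    apply intervalIntegral.integral_congr
    intro s _
    ring
  have hfin : t * V t ≤ Real.exp (2 * lam * t) * W 0 / 2 +
      (1/2) * lam^2 * c * W 0 * ((Real.exp (2*lam*t) * (2*lam*t - 1) + 1) / (4 * lam^2)) := by
    have : t * V t = (∫ s in (0:ℝ)..t, V s) + ∫ s in (0:ℝ)..t, s * V' s := by
      rw [← hsplit, key]; ring
    rw [this]
    have := hIg ▸ hmono
    linarith
  have hdiv : V t ≤ (Real.exp (2 * lam * t) * W 0 / 2 +
      (1/2) * lam^2 * c * W 0 * ((Real.exp (2*lam*t) * (2*lam*t - 1) + 1) / (4 * lam^2))) / t := by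
    rw [le_div_iff₀ ht]
    linarith [hfin]
  calc V t ≤ _ := hdiv
    _ = lam * W 0 * (Real.exp (2 * lam * t) / (2 * lam * t) +
        (1 / 4) * c *
          (2 * lam * t * Real.exp (2 * lam * t) - (Real.exp (2 * lam * t) - 1)) /
            (2 * lam * t)) := by
      field_simp
      ring
end
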